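/- For all natural numbers k ≥ 1 and n ≥ 2, C(n,k) < n^n / (⌊n/α_1⌋^{⌊n/α_1⌋} · ⌊n/α_2⌋^{⌊n/α_2⌋} · ... · ⌊n/α_k⌋^{⌊n/α_k⌋}) (as real numbers, with the convention 0⁰ = 1). -/
import Mathlib


/-- Auxiliary: `alphaAux i` is `α_{i+1}`, with `α_1 = 2` and
`α_{i+1} = α_i² - α_i + 1`. -/
def alphaAux : ℕ → ℕ
  | 0 => 2
  | i + 1 => alphaAux i ^ 2 - alphaAux i + 1

/-- The sequence `α_1 = 2, α_2 = 3, α_3 = 7, α_4 = 43, ...`, indexed from `1`. -/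
def alphaSeq (i : ℕ) : ℕ := alphaAux (i - 1)

/-- Hanson's sequence `C(n,k) = n! / (⌊n/α_1⌋! ⌊n/α_2⌋! ⋯ ⌊n/α_k⌋!)`. -/
def hansonC (n k : ℕ) : ℕ :=
  n.factorial / ∏ i ∈ Finset.Icc 1 k, (n / alphaSeq i).factorial

lemma pow_self_pos (m : ℕ) : 0 < m ^ m := by
  rcases Nat.eq_zero_or_pos m with h | h
  · simp [h]
  · exact pow_pos h m

lemma two_le_alphaAux : ∀ j, 2 ≤ alphaAux j
  | 0 => le_refl 2
  | j + 1 => by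
    have h := two_le_alphaAux j
    have : 2 * alphaAux j ≤ alphaAux j ^ 2 := by nlinarith
    simp only [alphaAux]
    omega

lemma alphaAux_succ_sub_one (j : ℕ) :
    alphaAux (j + 1) - 1 = alphaAux j * (alphaAux j - 1) := by
  have h := two_le_alphaAux j
  simp only [alphaAux]
  have : alphaAux j ^ 2 = alphaAux j * alphaAux j := sq (alphaAux j)
  rw [this, Nat.mul_sub]
  omega

lemma prod_alphaAux : ∀ k, ∏ j ∈ Finset.range k, alphaAux j = alphaAux k - 1
  | 0 => by simp [alphaAux]
  | k + 1 => by
    rw [Finset.prod_range_succ, prod_alphaAux k, alphaAux_succ_sub_one]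
    ring

lemma dvd_alphaAux_sub_one {j k : ℕ} (h : j < k) : alphaAux j ∣ alphaAux k - 1 := by
  rw [← prod_alphaAux]
  exact Finset.dvd_prod_of_mem _ (Finset.mem_range.mpr h)

lemma sum_div_alphaAux : ∀ k, ∑ j ∈ Finset.range k, (alphaAux k - 1) / alphaAux j
    = alphaAux k - 2
  | 0 => by simp [alphaAux]
  | k + 1 => by
    have h2 := two_le_alphaAux k
    rw [Finset.sum_range_succ]
    have hterm : ∀ j ∈ Finset.range k,
        (alphaAux (k + 1) - 1) / alphaAux j
          = alphaAux k * ((alphaAux k - 1) / alphaAux j) := by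
      intro j hj
      rw [alphaAux_succ_sub_one,
        Nat.mul_div_assoc _ (dvd_alphaAux_sub_one (Finset.mem_range.mp hj))]
    rw [Finset.sum_congr rfl hterm, ← Finset.mul_sum, sum_div_alphaAux k,
      alphaAux_succ_sub_one, Nat.mul_div_cancel_left _ (by omega : 0 < alphaAux k)]
    have hsq : alphaAux (k + 1) = alphaAux k * alphaAux k - alphaAux k + 1 := by
      simp only [alphaAux]; rw [sq]
    have hmul : alphaAux k * (alphaAux k - 2) = alphaAux k * alphaAux k - 2 * alphaAux k := by
      rw [Nat.mul_sub]; ring_nf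
    have : alphaAux k ≤ alphaAux k * alphaAux k := Nat.le_mul_of_pos_left _ (by omega)
    have h2a : 2 * alphaAux k ≤ alphaAux k * alphaAux k := by nlinarith
    omega

/-- The sum of the floors `⌊n/α_i⌋` is strictly less than `n`. -/
lemma sum_floor_lt (n : ℕ) (hn : 1 ≤ n) (k : ℕ) :
    ∑ j ∈ Finset.range k, n / alphaAux j < n := by
  have hEk := two_le_alphaAux k
  set E := alphaAux k - 1 with hE
  have hEpos : 1 ≤ E := by omega
  have key : E * (∑ j ∈ Finset.range k, n / alphaAux j) ≤ n * (alphaAux k - 2) := by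
    rw [Finset.mul_sum]
    calc ∑ j ∈ Finset.range k, E * (n / alphaAux j)
        ≤ ∑ j ∈ Finset.range k, n * (E / alphaAux j) := by
          refine Finset.sum_le_sum fun j hj => ?_
          have hdvd : alphaAux j ∣ E := dvd_alphaAux_sub_one (Finset.mem_range.mp hj)
          have h1 : (n / alphaAux j) * alphaAux j ≤ n := Nat.div_mul_le_self n _
          calc E * (n / alphaAux j) = (n / alphaAux j) * alphaAux j * (E / alphaAux j) := by
                rw [mul_assoc, Nat.mul_div_cancel' hdvd, mul_comm]
            _ ≤ n * (E / alphaAux j) := Nat.mul_le_mul_right _ h1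
      _ = n * (alphaAux k - 2) := by rw [← Finset.mul_sum, sum_div_alphaAux]
  have hlt : n * (alphaAux k - 2) < n * E :=
    Nat.mul_lt_mul_of_le_of_lt (le_refl n) (by omega) (by omega)
  have hfin : E * (∑ j ∈ Finset.range k, n / alphaAux j) < E * n :=
    calc E * (∑ j ∈ Finset.range k, n / alphaAux j) ≤ n * (alphaAux k - 2) := key
      _ < n * E := hlt
      _ = E * n := mul_comm n E
  exact Nat.lt_of_mul_lt_mul_left hfin

/-- Binomial bound: `C(a+b, a) * a^a * b^b ≤ (a+b)^(a+b)`. -/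
lemma choose_bound (a b : ℕ) :
    (a + b).choose a * (a ^ a * b ^ b) ≤ (a + b) ^ (a + b) := by
  rw [add_pow]
  calc (a + b).choose a * (a ^ a * b ^ b)
      = a ^ a * b ^ (a + b - a) * (a + b).choose a := by
        rw [Nat.add_sub_cancel_left]; ring
    _ ≤ ∑ j ∈ Finset.range (a + b + 1), a ^ j * b ^ (a + b - j) * (a + b).choose j := by
        exact Finset.single_le_sum
          (f := fun j => a ^ j * b ^ (a + b - j) * (a + b).choose j)
          (fun j _ => Nat.zero_le _) (Finset.mem_range.mpr (by omega))

/-- Strict binomial bound when both parts are positive. -/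
lemma choose_bound_strict (a b : ℕ) (ha : 1 ≤ a) (hb : 1 ≤ b) :
    (a + b).choose a * (a ^ a * b ^ b) < (a + b) ^ (a + b) := by
  rw [add_pow]
  set f : ℕ → ℕ := fun j => a ^ j * b ^ (a + b - j) * (a + b).choose j with hf
  have hne : a ≠ a + b := by omega
  have hpair : f a + f (a + b) = ∑ j ∈ ({a, a + b} : Finset ℕ), f j :=
    (Finset.sum_pair hne).symm
  have hsub : ({a, a + b} : Finset ℕ) ⊆ Finset.range (a + b + 1) := by
    intro x hx
    simp only [Finset.mem_insert, Finset.mem_singleton] at hx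
    rcases hx with h | h <;> simp [h] <;> omega
  have hle : ∑ j ∈ ({a, a + b} : Finset ℕ), f j
      ≤ ∑ j ∈ Finset.range (a + b + 1), f j :=
    Finset.sum_le_sum_of_subset hsub
  have hfa : f a = (a + b).choose a * (a ^ a * b ^ b) := by
    simp only [hf, Nat.add_sub_cancel_left]; ring
  have hftop : 0 < f (a + b) := by
    simp only [hf, Nat.sub_self, pow_zero, Nat.choose_self, mul_one]
    positivity
  calc (a + b).choose a * (a ^ a * b ^ b) = f a := hfa.symm
    _ < f a + f (a + b) := by omega
    _ = ∑ j ∈ ({a, a + b} : Finset ℕ), f j := hpair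
    _ ≤ ∑ j ∈ Finset.range (a + b + 1), f j := hle

/-- Main telescoping induction in `ℕ`. -/
lemma main_bound (n : ℕ) (hn : 2 ≤ n) : ∀ k, 1 ≤ k →
    n.factorial * (∏ j ∈ Finset.range k, (n / alphaAux j) ^ (n / alphaAux j))
        * (n - ∑ j ∈ Finset.range k, n / alphaAux j)
            ^ (n - ∑ j ∈ Finset.range k, n / alphaAux j)
      < n ^ n * (∏ j ∈ Finset.range k, (n / alphaAux j).factorial)
        * (n - ∑ j ∈ Finset.range k, n / alphaAux j).factorial := by
  intro k hk
  induction k, hk using Nat.le_induction with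
  | base =>
    simp only [Finset.prod_range_one, Finset.sum_range_one]
    have ha0 : alphaAux 0 = 2 := rfl
    rw [ha0]
    set a := n / 2 with hadef
    have ha : 1 ≤ a := by
      rw [hadef]; omega
    have haln : a ≤ n := Nat.div_le_self n 2
    have halt : a < n := Nat.div_lt_self (by omega) (by omega)
    set b := n - a with hbdef
    have hb : 1 ≤ b := by omega
    have hab : a + b = n := by omega
    have hstrict := choose_bound_strict a b ha hb
    rw [hab] at hstrict
    have hfact : n.choose a * a.factorial * b.factorial = n.factorial := by
      have := Nat.choose_mul_factorial_mul_factorial haln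
      rw [← hbdef] at this
      exact this
    calc n.factorial * a ^ a * b ^ b
        = (n.choose a * (a ^ a * b ^ b)) * (a.factorial * b.factorial) := by
          rw [← hfact]; ring
      _ ≤ ((n ^ n - 1)) * (a.factorial * b.factorial) := by
          exact Nat.mul_le_mul_right _ (by omega)
      _ < n ^ n * (a.factorial * b.factorial) := by
          have h1 : 0 < a.factorial * b.factorial :=
            Nat.mul_pos a.factorial_pos b.factorial_pos
          have h2 : 0 < n ^ n := by positivity
          exact (Nat.mul_lt_mul_right h1).mpr (by omega)
      _ = n ^ n * a.factorial * b.factorial := by ring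
  | succ k hk1 ih =>
    set m := n / alphaAux k with hm
    set S := ∑ j ∈ Finset.range k, n / alphaAux j with hS
    set P := ∏ j ∈ Finset.range k, (n / alphaAux j) ^ (n / alphaAux j) with hP
    set M := ∏ j ∈ Finset.range k, (n / alphaAux j).factorial with hM
    have hsum : ∑ j ∈ Finset.range (k + 1), n / alphaAux j = S + m := by
      rw [Finset.sum_range_succ]
    have hS' : S + m < n := by
      have := sum_floor_lt n (by omega) (k + 1)
      rw [hsum] at this; exact this
    rw [hsum, Finset.prod_range_succ, Finset.prod_range_succ, ← hP, ← hM, ← hm]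
    set r1 := n - S with hr1
    set r2 := n - (S + m) with hr2
    clear_value m S P M r1 r2
    have hr12 : r1 = m + r2 := by omega
    -- binomial bound at this step
    have hbin : r1.factorial * (m ^ m * r2 ^ r2)
        ≤ r1 ^ r1 * (m.factorial * r2.factorial) := by
      have hcb := choose_bound m r2
      have hfact : (m + r2).choose m * m.factorial * r2.factorial
          = (m + r2).factorial := by
        have := Nat.choose_mul_factorial_mul_factorial (Nat.le_add_right m r2)
        rwa [Nat.add_sub_cancel_left] at this
      calc r1.factorial * (m ^ m * r2 ^ r2)
          = ((m + r2).choose m * (m ^ m * r2 ^ r2)) * (m.factorial * r2.factorial) := by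
            rw [hr12, ← hfact]; ring
        _ ≤ (m + r2) ^ (m + r2) * (m.factorial * r2.factorial) :=
            Nat.mul_le_mul_right _ hcb
        _ = r1 ^ r1 * (m.factorial * r2.factorial) := by rw [hr12]
    -- multiply everything by r1! and chain
    have key : n.factorial * (P * m ^ m) * r2 ^ r2 * r1.factorial
        < n ^ n * (M * m.factorial) * r2.factorial * r1.factorial := by
      calc n.factorial * (P * m ^ m) * r2 ^ r2 * r1.factorial
          = (n.factorial * P) * (r1.factorial * (m ^ m * r2 ^ r2)) := by ring
        _ ≤ (n.factorial * P) * (r1 ^ r1 * (m.factorial * r2.factorial)) :=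
            Nat.mul_le_mul_left _ hbin
        _ = (n.factorial * P * r1 ^ r1) * (m.factorial * r2.factorial) := by ring
        _ < (n ^ n * M * r1.factorial) * (m.factorial * r2.factorial) := by
            refine (Nat.mul_lt_mul_right ?_).mpr ih
            exact Nat.mul_pos m.factorial_pos r2.factorial_pos
        _ = n ^ n * (M * m.factorial) * r2.factorial * r1.factorial := by ring
    exact Nat.lt_of_mul_lt_mul_right key

/-- Key inequality in `ℕ`: `n! * ∏ mᵢ^mᵢ < n^n * ∏ mᵢ!`. -/
lemma key_bound (n k : ℕ) (hk : 1 ≤ k) (hn : 2 ≤ n) :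
    n.factorial * (∏ j ∈ Finset.range k, (n / alphaAux j) ^ (n / alphaAux j))
      < n ^ n * (∏ j ∈ Finset.range k, (n / alphaAux j).factorial) := by
  have h := main_bound n hn k hk
  set S := ∑ j ∈ Finset.range k, n / alphaAux j with hS
  set r := n - S with hr
  have hrpos : 1 ≤ r := by
    have := sum_floor_lt n (by omega) k
    omega
  have hfle : r.factorial ≤ r ^ r := Nat.factorial_le_pow r
  have hrr : 0 < r ^ r := by positivity
  have h2 : n.factorial * (∏ j ∈ Finset.range k, (n / alphaAux j) ^ (n / alphaAux j)) * r ^ r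
      < n ^ n * (∏ j ∈ Finset.range k, (n / alphaAux j).factorial) * r ^ r :=
    lt_of_lt_of_le h (Nat.mul_le_mul_left _ hfle)
  exact Nat.lt_of_mul_lt_mul_right h2

lemma Icc_to_range {β : Type*} [CommMonoid β] (k : ℕ) (f : ℕ → β) :
    ∏ i ∈ Finset.Icc 1 k, f i = ∏ j ∈ Finset.range k, f (j + 1) := by
  induction k with
  | zero => simp
  | succ k ih =>
    rw [Finset.prod_range_succ, ← ih, ← Finset.prod_Icc_succ_top (by omega)]

lemma alphaSeq_succ (j : ℕ) : alphaSeq (j + 1) = alphaAux j := by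
  simp [alphaSeq]

/-- For `k ≥ 1` and `n ≥ 2`,
`C(n,k) < n^n / (⌊n/α_1⌋^⌊n/α_1⌋ ⋯ ⌊n/α_k⌋^⌊n/α_k⌋)` (with `0⁰ = 1`). -/
theorem hansonC_lt (n k : ℕ) (hk : 1 ≤ k) (hn : 2 ≤ n) :
    (hansonC n k : ℝ)
      < (n : ℝ) ^ n /
          ∏ i ∈ Finset.Icc 1 k, ((n / alphaSeq i : ℕ) : ℝ) ^ (n / alphaSeq i : ℕ) := by
  have hMeq : (∏ i ∈ Finset.Icc 1 k, (n / alphaSeq i).factorial)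
      = ∏ j ∈ Finset.range k, (n / alphaAux j).factorial := by
    rw [Icc_to_range]
    exact Finset.prod_congr rfl fun j _ => by rw [alphaSeq_succ]
  have hPeq : (∏ i ∈ Finset.Icc 1 k, ((n / alphaSeq i : ℕ) : ℝ) ^ (n / alphaSeq i : ℕ))
      = ((∏ j ∈ Finset.range k, (n / alphaAux j) ^ (n / alphaAux j) : ℕ) : ℝ) := by
    push_cast
    rw [Icc_to_range]
    exact Finset.prod_congr rfl fun j _ => by rw [alphaSeq_succ]
  set M : ℕ := ∏ j ∈ Finset.range k, (n / alphaAux j).factorial with hM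
  set P : ℕ := ∏ j ∈ Finset.range k, (n / alphaAux j) ^ (n / alphaAux j) with hP
  have hMpos : 0 < M := Finset.prod_pos fun j _ => Nat.factorial_pos _
  have hPpos : 0 < P := Finset.prod_pos fun j _ => pow_self_pos _
  have hkey := key_bound n k hk hn
  rw [hPeq]
  have h1 : (hansonC n k : ℝ) ≤ (n.factorial : ℝ) / (M : ℝ) := by
    rw [hansonC, hMeq]
    exact Nat.cast_div_le
  refine lt_of_le_of_lt h1 ?_
  rw [div_lt_div_iff₀ (by exact_mod_cast hMpos) (by exact_mod_cast hPpos)]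
  calc (n.factorial : ℝ) * (P : ℝ) = ((n.factorial * P : ℕ) : ℝ) := by push_cast; ring
    _ < ((n ^ n * M : ℕ) : ℝ) := by exact_mod_cast hkey
    _ = (n : ℝ) ^ n * (M : ℝ) := by push_cast; ring
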